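/- arXiv:2512.21765 — 3 statements merged into one kernel-verified Lean document; each statement's English description precedes it below -/
import Mathlib

section
/- Tropicalization of the Plücker relation: let K be a field with valuation val satisfying val(ab) = val(a)+val(b) and val(a+b) ≤ max(val(a), val(b)) with equality whenever val(a) ≠ val(b). If p_{ij}, p_{kl}, p_{ik}, p_{jl}, p_{il}, p_{jk} are nonzero elements of K satisfying p_{ij}p_{kl} − p_{ik}p_{jl} + p_{il}p_{jk} = 0, then the maximum of the three real numbers val(p_{ij})+val(p_{kl}), val(p_{ik})+val(p_{jl}), val(p_{il})+val(p_{jk}) is attained at least twice. -/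
/-- Tropicalization of the Plücker relation: if six nonzero elements of a valued
field satisfy the three-term Plücker relation, then the maximum among the three
sums of valuations is attained at least twice. -/
theorem stmt5 {K : Type*} [Field K] (val : K → WithBot ℝ)
    (hzero : ∀ a : K, val a = ⊥ ↔ a = 0)
    (hmul : ∀ a b : K, val (a * b) = val a + val b)
    (hadd : ∀ a b : K, val (a + b) ≤ max (val a) (val b))
    (hadd_eq : ∀ a b : K, val a ≠ val b → val (a + b) = max (val a) (val b))
    (pij pkl pik pjl pil pjk : K)
    (hij : pij ≠ 0) (hkl : pkl ≠ 0) (hik : pik ≠ 0)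
    (hjl : pjl ≠ 0) (hil : pil ≠ 0) (hjk : pjk ≠ 0)
    (hrel : pij * pkl - pik * pjl + pil * pjk = 0) :
    (val pij + val pkl = val pik + val pjl ∧
      val pil + val pjk ≤ val pij + val pkl) ∨
    (val pij + val pkl = val pil + val pjk ∧
      val pik + val pjl ≤ val pij + val pkl) ∨
    (val pik + val pjl = val pil + val pjk ∧
      val pij + val pkl ≤ val pik + val pjl) := by
  -- val (-1) = 0
  have hone : val 1 = 0 := by
    have h := hmul 1 1
    rw [one_mul] at h
    obtain ⟨r, hr⟩ := WithBot.ne_bot_iff_exists.mp (by simp [hzero] : val (1 : K) ≠ ⊥)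
    rw [← hr] at h ⊢
    have : r = r + r := by exact_mod_cast h
    have : r = 0 := by linarith
    simp [this]
  have hnegone : val (-1 : K) = 0 := by
    have h := hmul (-1 : K) (-1)
    rw [neg_mul_neg, one_mul, hone] at h
    obtain ⟨r, hr⟩ := WithBot.ne_bot_iff_exists.mp (by simp [hzero] : val (-1 : K) ≠ ⊥)
    rw [← hr] at h ⊢
    have : (0:ℝ) = r + r := by exact_mod_cast h
    have : r = 0 := by linarith
    simp [this]
  have hneg : ∀ x : K, val (-x) = val x := by
    intro x
    have := hmul (-1 : K) x
    rw [neg_one_mul, hnegone, zero_add] at this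
    exact this
  set a := pij * pkl with ha
  set b := pik * pjl with hb
  set c := pil * pjk with hc
  rw [← hmul pij pkl, ← hmul pik pjl, ← hmul pil pjk]
  have hab : a - b = -c := by linear_combination hrel
  have hbac : b = a + c := by linear_combination -hrel
  by_cases h : val a = val b
  · -- show val c ≤ val a
    left
    refine ⟨h, ?_⟩
    by_contra hlt
    push_neg at hlt
    have hne : val a ≠ val c := ne_of_lt hlt
    have := hadd_eq a c hne
    rw [← hbac, ← h] at this
    rw [max_eq_right hlt.le] at this
    exact absurd this (ne_of_lt hlt)
  · have hmax : val c = max (val a) (val b) := by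
      have := hadd_eq a (-b) (by rwa [hneg])
      rw [sub_eq_add_neg] at hab
      rw [hab, hneg, hneg] at this
      exact this
    rcases le_total (val a) (val b) with hle | hle
    · right; right
      constructor
      · rw [hmax, max_eq_right hle]
      · exact hle
    · right; left
      constructor
      · rw [hmax, max_eq_left hle]
      · exact hle
end

section
/- Tropical line segments between ultrametrics stay in ultrametric space: let u, v : X × X → ℝ be ultrametrics on a finite set X (symmetric, zero on the diagonal, satisfying u(i,k) ≤ max(u(i,j), u(j,k)) and similarly for v). Then for every ℓ ∈ ℝ, the function w(i,j) := max(ℓ + u(i,j), v(i,j)) for i ≠ j (and w(i,i) := 0) satisfies the ultrametric inequality w(i,k) ≤ max(w(i,j), w(j,k)) for all distinct i, j, k. -/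
/-- Tropical line segments between ultrametrics stay in ultrametric space. -/
theorem stmt10 {X : Type*} [Fintype X] [DecidableEq X]
    (u v : X → X → ℝ)
    (husymm : ∀ i j, u i j = u j i) (hudiag : ∀ i, u i i = 0)
    (hu : ∀ i j k, u i k ≤ max (u i j) (u j k))
    (hvsymm : ∀ i j, v i j = v j i) (hvdiag : ∀ i, v i i = 0)
    (hv : ∀ i j k, v i k ≤ max (v i j) (v j k))
    (ℓ : ℝ) :
    ∀ i j k : X, i ≠ j → j ≠ k → i ≠ k →
      (fun a b => if a = b then (0 : ℝ) else max (ℓ + u a b) (v a b)) i k ≤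
        max ((fun a b => if a = b then (0 : ℝ) else max (ℓ + u a b) (v a b)) i j)
            ((fun a b => if a = b then (0 : ℝ) else max (ℓ + u a b) (v a b)) j k) := by
  intro i j k hij hjk hik
  simp only [if_neg hij, if_neg hjk, if_neg hik]
  have hu' := hu i j k
  have hv' := hv i j k
  apply max_le
  · calc ℓ + u i k ≤ ℓ + max (u i j) (u j k) := by linarith
      _ = max (ℓ + u i j) (ℓ + u j k) := by rw [add_max]
      _ ≤ _ := max_le_max (le_max_left _ _) (le_max_left _ _)
  · exact le_trans hv' (max_le_max (le_max_right _ _) (le_max_right _ _))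
end

section
/- The set of ultrametrics is tropically convex: if u⁽¹⁾, …, u⁽ᵏ⁾ : X × X → ℝ each satisfy the ultrametric inequality u(i,k) ≤ max(u(i,j), u(j,k)) and symmetry, and λ₁, …, λₖ ∈ ℝ, then w(i,j) := max over m of (λₘ + u⁽ᵐ⁾(i,j)) is symmetric and satisfies the ultrametric inequality. -/
/-- The set of ultrametrics is tropically convex: a max-plus combination of
symmetric functions satisfying the ultrametric inequality is again symmetric and
satisfies the ultrametric inequality. -/
theorem stmt11 {X : Type*} {k : ℕ} [NeZero k]
    (u : Fin k → X → X → ℝ)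
    (hsymm : ∀ m i j, u m i j = u m j i)
    (hultra : ∀ m i j l, u m i l ≤ max (u m i j) (u m j l))
    (lam : Fin k → ℝ) :
    (∀ i j : X,
      Finset.univ.sup' Finset.univ_nonempty (fun m => lam m + u m i j) =
      Finset.univ.sup' Finset.univ_nonempty (fun m => lam m + u m j i)) ∧
    (∀ i j l : X,
      Finset.univ.sup' Finset.univ_nonempty (fun m => lam m + u m i l) ≤
        max (Finset.univ.sup' Finset.univ_nonempty (fun m => lam m + u m i j))
            (Finset.univ.sup' Finset.univ_nonempty (fun m => lam m + u m j l))) := by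
  constructor
  · intro i j
    simp only [hsymm]
  · intro i j l
    rw [Finset.sup'_le_iff]
    intro m _
    rcases le_max_iff.mp (hultra m i j l) with h | h
    · exact le_max_of_le_left ((add_le_add_right h _).trans
        (Finset.le_sup' (fun m => lam m + u m i j) (Finset.mem_univ m)))
    · exact le_max_of_le_right ((add_le_add_right h _).trans
        (Finset.le_sup' (fun m => lam m + u m j l) (Finset.mem_univ m)))
end
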